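/- Let P and Q be transition kernels induced by two policies π' and π on a finite MDP with discount γ ∈ [0,1). For any reward r: S×A → [−1,1] with values bounded by 1 in absolute value, the difference in discounted state-action occupancy measures satisfies (1/(1−γ)) Σ_{s,a} |d_{π'}(s)π'(a|s) − d_π(s)π(a|s)| ≤ (1/(1−γ)²) max_s Σ_a |π'(a|s) − π(a|s)|. -/

import Mathlib

open Matrix Finset

noncomputable def policyKernel {S A : Type*} [Fintype A]
    (P : S → A → S → ℝ) (π : S → A → ℝ) : Matrix S S ℝ :=
  fun s s' => ∑ a, π s a * P s a s'

noncomputable def discountedVisitation {S A : Type*} [Fintype S] [DecidableEq S] [Fintype A]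
    (γ : ℝ) (ρ : S → ℝ) (P : S → A → S → ℝ) (π : S → A → ℝ) (s : S) : ℝ :=
  (1 - γ) * ∑' t : ℕ, γ ^ t * (Matrix.vecMul ρ (policyKernel P π ^ t)) s

section aux

variable {S : Type*} [Fintype S]

lemma vecMul_apply' (w : S → ℝ) (K : Matrix S S ℝ) (s' : S) :
    Matrix.vecMul w K s' = ∑ s, w s * K s s' := by
  simp [Matrix.vecMul, dotProduct]

lemma l1_vecMul_le (w : S → ℝ) (K : Matrix S S ℝ)
    (hK0 : ∀ s s', 0 ≤ K s s') (hK1 : ∀ s, ∑ s', K s s' = 1) :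
    ∑ s', |Matrix.vecMul w K s'| ≤ ∑ s, |w s| := by
  calc ∑ s', |Matrix.vecMul w K s'| ≤ ∑ s', ∑ s, |w s| * K s s' := by
        refine Finset.sum_le_sum fun s' _ => ?_
        rw [vecMul_apply']
        refine (Finset.abs_sum_le_sum_abs _ _).trans (le_of_eq ?_)
        refine Finset.sum_congr rfl fun s _ => ?_
        rw [abs_mul, abs_of_nonneg (hK0 s s')]
    _ = ∑ s, |w s| := by
        rw [Finset.sum_comm]
        refine Finset.sum_congr rfl fun s _ => ?_
        rw [← Finset.mul_sum, hK1, mul_one]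

lemma l1_vecMul_prob_le (v : S → ℝ) (hv0 : ∀ s, 0 ≤ v s) (hv1 : ∑ s, v s = 1)
    (M : Matrix S S ℝ) (ε : ℝ) (hM : ∀ s, ∑ s', |M s s'| ≤ ε) :
    ∑ s', |Matrix.vecMul v M s'| ≤ ε := by
  calc ∑ s', |Matrix.vecMul v M s'| ≤ ∑ s', ∑ s, v s * |M s s'| := by
        refine Finset.sum_le_sum fun s' _ => ?_
        rw [vecMul_apply']
        refine (Finset.abs_sum_le_sum_abs _ _).trans (le_of_eq ?_)
        refine Finset.sum_congr rfl fun s _ => ?_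
        rw [abs_mul, abs_of_nonneg (hv0 s)]
    _ = ∑ s, v s * ∑ s', |M s s'| := by rw [Finset.sum_comm]; simp [Finset.mul_sum]
    _ ≤ ∑ s, v s * ε :=
        Finset.sum_le_sum fun s _ => mul_le_mul_of_nonneg_left (hM s) (hv0 s)
    _ = ε := by rw [← Finset.sum_mul, hv1, one_mul]

lemma prob_vecMul (v : S → ℝ) (hv0 : ∀ s, 0 ≤ v s) (hv1 : ∑ s, v s = 1)
    (K : Matrix S S ℝ) (hK0 : ∀ s s', 0 ≤ K s s') (hK1 : ∀ s, ∑ s', K s s' = 1) :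
    (∀ s', 0 ≤ Matrix.vecMul v K s') ∧ ∑ s', Matrix.vecMul v K s' = 1 := by
  constructor
  · intro s'
    rw [vecMul_apply']
    exact Finset.sum_nonneg fun s _ => mul_nonneg (hv0 s) (hK0 s s')
  · simp only [vecMul_apply']
    rw [Finset.sum_comm]
    calc ∑ s, ∑ s', v s * K s s' = ∑ s, v s := by
          refine Finset.sum_congr rfl fun s _ => ?_
          rw [← Finset.mul_sum, hK1, mul_one]
      _ = 1 := hv1

end aux

theorem occupancy_tv_le_policy_tv {S A : Type*} [Fintype S] [DecidableEq S] [Nonempty S]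
    [Fintype A]
    (γ : ℝ) (hγ0 : 0 ≤ γ) (hγ1 : γ < 1)
    (ρ : S → ℝ) (hρ0 : ∀ s, 0 ≤ ρ s) (hρ1 : ∑ s, ρ s = 1)
    (P : S → A → S → ℝ) (hP0 : ∀ s a s', 0 ≤ P s a s') (hP1 : ∀ s a, ∑ s', P s a s' = 1)
    (π π' : S → A → ℝ)
    (hπ0 : ∀ s a, 0 ≤ π s a) (hπ1 : ∀ s, ∑ a, π s a = 1)
    (hπ'0 : ∀ s a, 0 ≤ π' s a) (hπ'1 : ∀ s, ∑ a, π' s a = 1) :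
    (1 / (1 - γ)) * ∑ s, ∑ a,
        |discountedVisitation γ ρ P π' s * π' s a - discountedVisitation γ ρ P π s * π s a|
      ≤ (1 / (1 - γ) ^ 2) *
        Finset.univ.sup' Finset.univ_nonempty (fun s => ∑ a, |π' s a - π s a|) := by
  have h1γ : 0 < 1 - γ := by linarith
  set ε := Finset.univ.sup' Finset.univ_nonempty (fun s => ∑ a, |π' s a - π s a|) with hεdef
  have hε : ∀ s, ∑ a, |π' s a - π s a| ≤ ε := fun s =>
    Finset.le_sup' (fun s => ∑ a, |π' s a - π s a|) (Finset.mem_univ s)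
  have hε0 : 0 ≤ ε :=
    le_trans (Finset.sum_nonneg fun a _ => abs_nonneg _) (hε (Classical.arbitrary S))
  set K := policyKernel P π with hK
  set K' := policyKernel P π' with hK'
  -- stochasticity of kernels
  have kernel0 : ∀ (p : S → A → ℝ), (∀ s a, 0 ≤ p s a) →
      ∀ s s', 0 ≤ policyKernel P p s s' := fun p hp s s' =>
    Finset.sum_nonneg fun a _ => mul_nonneg (hp s a) (hP0 s a s')
  have kernel1 : ∀ (p : S → A → ℝ), (∀ s, ∑ a, p s a = 1) →
      ∀ s, ∑ s', policyKernel P p s s' = 1 := by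
    intro p hp s
    unfold policyKernel
    rw [Finset.sum_comm]
    calc ∑ a, ∑ s', p s a * P s a s' = ∑ a, p s a := by
          refine Finset.sum_congr rfl fun a _ => ?_
          rw [← Finset.mul_sum, hP1, mul_one]
      _ = 1 := hp s
  have hK0 : ∀ s s', 0 ≤ K s s' := kernel0 π hπ0
  have hK1 : ∀ s, ∑ s', K s s' = 1 := kernel1 π hπ1
  have hK'0 : ∀ s s', 0 ≤ K' s s' := kernel0 π' hπ'0
  have hK'1 : ∀ s, ∑ s', K' s s' = 1 := kernel1 π' hπ'1
  -- the iterates are probability vectors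
  have hprob : ∀ (M : Matrix S S ℝ), (∀ s s', 0 ≤ M s s') → (∀ s, ∑ s', M s s' = 1) →
      ∀ t : ℕ, (∀ s, 0 ≤ Matrix.vecMul ρ (M ^ t) s) ∧ ∑ s, Matrix.vecMul ρ (M ^ t) s = 1 := by
    intro M hM0 hM1 t
    induction t with
    | zero => simpa [Matrix.vecMul_one] using ⟨hρ0, hρ1⟩
    | succ t ih =>
        rw [pow_succ, ← Matrix.vecMul_vecMul]
        exact prob_vecMul _ ih.1 ih.2 M hM0 hM1
  have hv := hprob K' hK'0 hK'1
  have hu := hprob K hK0 hK1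
  -- row L1 bound on K' - K
  have hKK : ∀ s, ∑ s', |(K' - K) s s'| ≤ ε := by
    intro s
    have hentry : ∀ s', (K' - K) s s' = ∑ a, (π' s a - π s a) * P s a s' := by
      intro s'
      simp only [Matrix.sub_apply, hK, hK', policyKernel, ← Finset.sum_sub_distrib]
      exact Finset.sum_congr rfl fun a _ => by ring
    calc ∑ s', |(K' - K) s s'| ≤ ∑ s', ∑ a, |π' s a - π s a| * P s a s' := by
          refine Finset.sum_le_sum fun s' _ => ?_
          rw [hentry]
          refine (Finset.abs_sum_le_sum_abs _ _).trans (le_of_eq ?_)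
          exact Finset.sum_congr rfl fun a _ => by
            rw [abs_mul, abs_of_nonneg (hP0 s a s')]
      _ = ∑ a, |π' s a - π s a| := by
          rw [Finset.sum_comm]
          refine Finset.sum_congr rfl fun a _ => ?_
          rw [← Finset.mul_sum, hP1, mul_one]
      _ ≤ ε := hε s
  -- difference of iterates bound
  have hdiff : ∀ t : ℕ,
      ∑ s, |Matrix.vecMul ρ (K' ^ t) s - Matrix.vecMul ρ (K ^ t) s| ≤ t * ε := by
    intro t
    induction t with
    | zero => simp [Matrix.vecMul_one]
    | succ t ih =>
        set v := Matrix.vecMul ρ (K' ^ t) with hvd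
        set u := Matrix.vecMul ρ (K ^ t) with hud
        have hsplit : ∀ s', Matrix.vecMul ρ (K' ^ (t + 1)) s' - Matrix.vecMul ρ (K ^ (t + 1)) s'
            = Matrix.vecMul v (K' - K) s' + Matrix.vecMul (v - u) K s' := by
          intro s'
          rw [pow_succ, pow_succ, ← Matrix.vecMul_vecMul, ← Matrix.vecMul_vecMul]
          simp only [vecMul_apply', ← hvd, ← hud, Matrix.sub_apply, Pi.sub_apply,
            ← Finset.sum_add_distrib, ← Finset.sum_sub_distrib]
          exact Finset.sum_congr rfl fun s _ => by ring
        calc ∑ s', |Matrix.vecMul ρ (K' ^ (t + 1)) s' - Matrix.vecMul ρ (K ^ (t + 1)) s'|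
            ≤ ∑ s', (|Matrix.vecMul v (K' - K) s'| + |Matrix.vecMul (v - u) K s'|) := by
              refine Finset.sum_le_sum fun s' _ => ?_
              rw [hsplit s']
              exact abs_add_le _ _
          _ = (∑ s', |Matrix.vecMul v (K' - K) s'|) + ∑ s', |Matrix.vecMul (v - u) K s'| :=
              Finset.sum_add_distrib
          _ ≤ ε + ∑ s, |(v - u) s| :=
              add_le_add (l1_vecMul_prob_le v (hv t).1 (hv t).2 _ ε hKK)
                (l1_vecMul_le _ K hK0 hK1)
          _ ≤ ε + t * ε := by
              have h2 : ∑ s, |(v - u) s| ≤ (t : ℝ) * ε := by simpa using ih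
              linarith
          _ = (t + 1 : ℕ) * ε := by push_cast; ring
  -- summability facts
  have hsummV : ∀ s, Summable (fun t : ℕ => γ ^ t * Matrix.vecMul ρ (K' ^ t) s) := by
    intro s
    refine Summable.of_norm_bounded (summable_geometric_of_lt_one hγ0 hγ1) fun t => ?_
    rw [Real.norm_eq_abs, abs_mul, abs_of_nonneg (pow_nonneg hγ0 t),
      abs_of_nonneg ((hv t).1 s)]
    have : Matrix.vecMul ρ (K' ^ t) s ≤ 1 := by
      rw [← (hv t).2]
      exact Finset.single_le_sum (fun s _ => (hv t).1 s) (Finset.mem_univ s)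
    nlinarith [pow_nonneg hγ0 t]
  have hsummU : ∀ s, Summable (fun t : ℕ => γ ^ t * Matrix.vecMul ρ (K ^ t) s) := by
    intro s
    refine Summable.of_norm_bounded (summable_geometric_of_lt_one hγ0 hγ1) fun t => ?_
    rw [Real.norm_eq_abs, abs_mul, abs_of_nonneg (pow_nonneg hγ0 t),
      abs_of_nonneg ((hu t).1 s)]
    have : Matrix.vecMul ρ (K ^ t) s ≤ 1 := by
      rw [← (hu t).2]
      exact Finset.single_le_sum (fun s _ => (hu t).1 s) (Finset.mem_univ s)
    nlinarith [pow_nonneg hγ0 t]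
  have hsummD : ∀ s, Summable (fun t : ℕ =>
      γ ^ t * (Matrix.vecMul ρ (K' ^ t) s - Matrix.vecMul ρ (K ^ t) s)) := by
    intro s
    have := (hsummV s).sub (hsummU s)
    simpa [mul_sub] using this
  -- d' s - d s as a tsum
  have hdeq : ∀ s, discountedVisitation γ ρ P π' s - discountedVisitation γ ρ P π s
      = (1 - γ) * ∑' t : ℕ, γ ^ t * (Matrix.vecMul ρ (K' ^ t) s - Matrix.vecMul ρ (K ^ t) s) := by
    intro s
    unfold discountedVisitation
    rw [← mul_sub, ← Summable.tsum_sub (hsummV s) (hsummU s)]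
    congr 1
    exact tsum_congr fun t => by ring
  -- L1 bound on visitation difference
  have hvisit : ∑ s, |discountedVisitation γ ρ P π' s - discountedVisitation γ ρ P π s|
      ≤ γ * ε / (1 - γ) := by
    have habs : ∀ s, Summable (fun t : ℕ =>
        |γ ^ t * (Matrix.vecMul ρ (K' ^ t) s - Matrix.vecMul ρ (K ^ t) s)|) :=
      fun s => (hsummD s).abs
    calc ∑ s, |discountedVisitation γ ρ P π' s - discountedVisitation γ ρ P π s|
        ≤ ∑ s, (1 - γ) * ∑' t : ℕ,
            |γ ^ t * (Matrix.vecMul ρ (K' ^ t) s - Matrix.vecMul ρ (K ^ t) s)| := by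
          refine Finset.sum_le_sum fun s _ => ?_
          rw [hdeq s, abs_mul, abs_of_nonneg h1γ.le]
          exact mul_le_mul_of_nonneg_left
            (by simpa [abs_mul, abs_pow] using norm_tsum_le_tsum_norm ((hsummD s).norm)) h1γ.le
      _ = (1 - γ) * ∑' t : ℕ, ∑ s,
            |γ ^ t * (Matrix.vecMul ρ (K' ^ t) s - Matrix.vecMul ρ (K ^ t) s)| := by
          rw [← Finset.mul_sum]
          congr 1
          exact (Summable.tsum_finsetSum fun s _ => habs s).symm
      _ ≤ (1 - γ) * ∑' t : ℕ, γ ^ t * (t * ε) := by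
          have hb : ∀ t : ℕ,
              ∑ s, |γ ^ t * (Matrix.vecMul ρ (K' ^ t) s - Matrix.vecMul ρ (K ^ t) s)|
              ≤ γ ^ t * (t * ε) := by
            intro t
            calc ∑ s, |γ ^ t * (Matrix.vecMul ρ (K' ^ t) s - Matrix.vecMul ρ (K ^ t) s)|
                = γ ^ t * ∑ s, |Matrix.vecMul ρ (K' ^ t) s - Matrix.vecMul ρ (K ^ t) s| := by
                  rw [Finset.mul_sum]
                  exact Finset.sum_congr rfl fun s _ => by
                    rw [abs_mul, abs_of_nonneg (pow_nonneg hγ0 t)]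
              _ ≤ γ ^ t * (t * ε) :=
                  mul_le_mul_of_nonneg_left (hdiff t) (pow_nonneg hγ0 t)
          have hs2 : Summable (fun t : ℕ => γ ^ t * ((t : ℝ) * ε)) := by
            have := (summable_pow_mul_geometric_of_norm_lt_one 1
              (by rwa [Real.norm_eq_abs, abs_of_nonneg hγ0] : ‖γ‖ < 1)).mul_right ε
            exact this.congr fun t => by push_cast; ring
          have hs1 : Summable (fun t : ℕ =>
              ∑ s, |γ ^ t * (Matrix.vecMul ρ (K' ^ t) s - Matrix.vecMul ρ (K ^ t) s)|) :=
            Summable.of_nonneg_of_le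
              (fun t => Finset.sum_nonneg fun s _ => abs_nonneg _) hb hs2
          exact mul_le_mul_of_nonneg_left (Summable.tsum_le_tsum hb hs1 hs2) h1γ.le
      _ = (1 - γ) * (ε * (γ / (1 - γ) ^ 2)) := by
          congr 1
          rw [← tsum_coe_mul_geometric_of_norm_lt_one
            (by rwa [Real.norm_eq_abs, abs_of_nonneg hγ0] : ‖γ‖ < 1), ← tsum_mul_left]
          exact tsum_congr fun t => by ring
      _ = γ * ε / (1 - γ) := by field_simp
  -- d' is a probability distribution
  have hd'0 : ∀ s, 0 ≤ discountedVisitation γ ρ P π' s := by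
    intro s
    unfold discountedVisitation
    refine mul_nonneg h1γ.le (tsum_nonneg fun t => mul_nonneg (pow_nonneg hγ0 t) ((hv t).1 s))
  have hd'1 : ∑ s, discountedVisitation γ ρ P π' s = 1 := by
    unfold discountedVisitation
    rw [← Finset.mul_sum, ← Summable.tsum_finsetSum fun s _ => hsummV s]
    have : ∀ t : ℕ, ∑ s, γ ^ t * Matrix.vecMul ρ (K' ^ t) s = γ ^ t := by
      intro t
      rw [← Finset.mul_sum, (hv t).2, mul_one]
    rw [tsum_congr this, tsum_geometric_of_lt_one hγ0 hγ1]
    field_simp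
  -- main estimate
  have hT : ∑ s, ∑ a,
      |discountedVisitation γ ρ P π' s * π' s a - discountedVisitation γ ρ P π s * π s a|
      ≤ ε / (1 - γ) := by
    calc ∑ s, ∑ a,
        |discountedVisitation γ ρ P π' s * π' s a - discountedVisitation γ ρ P π s * π s a|
        ≤ ∑ s, (discountedVisitation γ ρ P π' s * ε
            + |discountedVisitation γ ρ P π' s - discountedVisitation γ ρ P π s|) := by
          refine Finset.sum_le_sum fun s _ => ?_
          calc ∑ a, |discountedVisitation γ ρ P π' s * π' s a
                - discountedVisitation γ ρ P π s * π s a|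
              ≤ ∑ a, (discountedVisitation γ ρ P π' s * |π' s a - π s a|
                + |discountedVisitation γ ρ P π' s - discountedVisitation γ ρ P π s| * π s a) := by
                refine Finset.sum_le_sum fun a _ => ?_
                have heq : discountedVisitation γ ρ P π' s * π' s a
                    - discountedVisitation γ ρ P π s * π s a
                    = discountedVisitation γ ρ P π' s * (π' s a - π s a)
                    + (discountedVisitation γ ρ P π' s - discountedVisitation γ ρ P π s)
                      * π s a := by ring
                rw [heq]
                refine (abs_add_le _ _).trans (le_of_eq ?_)
                rw [abs_mul, abs_mul, abs_of_nonneg (hd'0 s), abs_of_nonneg (hπ0 s a)]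
            _ = discountedVisitation γ ρ P π' s * (∑ a, |π' s a - π s a|)
                + |discountedVisitation γ ρ P π' s - discountedVisitation γ ρ P π s|
                  * ∑ a, π s a := by
                rw [Finset.sum_add_distrib, Finset.mul_sum, Finset.mul_sum]
            _ ≤ discountedVisitation γ ρ P π' s * ε
                + |discountedVisitation γ ρ P π' s - discountedVisitation γ ρ P π s| := by
                rw [hπ1 s, mul_one]
                gcongr
                · exact hd'0 s
                · exact hε s
      _ = (∑ s, discountedVisitation γ ρ P π' s) * ε
          + ∑ s, |discountedVisitation γ ρ P π' s - discountedVisitation γ ρ P π s| := by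
          rw [Finset.sum_add_distrib, Finset.sum_mul]
      _ ≤ 1 * ε + γ * ε / (1 - γ) := by
          rw [hd'1]
          linarith [hvisit]
      _ = ε / (1 - γ) := by field_simp; ring
  calc (1 / (1 - γ)) * ∑ s, ∑ a,
      |discountedVisitation γ ρ P π' s * π' s a - discountedVisitation γ ρ P π s * π s a|
      ≤ (1 / (1 - γ)) * (ε / (1 - γ)) :=
        mul_le_mul_of_nonneg_left hT (div_nonneg zero_le_one h1γ.le)
    _ = (1 / (1 - γ) ^ 2) * ε := by rw [div_mul_div_comm, one_mul, ← sq, one_div_mul_eq_div]
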